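/- In ℚ[a,h,x₁,x₂], multiplication by x₁ − x₂ maps the ideal I₁ = (x₁ + x₂ − h, x₁x₂ + a) into the ideal I₂ = (x₁² − hx₁ − a, x₂² − hx₂ − a), so it induces a well-defined R₀-linear map λ : B₁ → B₂ sending the class of u to the class of (x₁ − x₂)·u; moreover, under the isomorphisms f : B₁ ≅ 𝒜 and g : B₂ ≅ 𝒜 ⊗_{R₀} 𝒜 the map λ corresponds to the comultiplication Δ, i.e. g ∘ λ = Δ ∘ f as R₀-linear maps B₁ → 𝒜 ⊗_{R₀} 𝒜. (This is the statement Λ₁* = Δ for the induced map on homology.) -/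

import Mathlib

open TensorProduct

noncomputable section

/-- `R₀ = ℚ[a,h]`. -/
abbrev R0 : Type := MvPolynomial (Fin 2) ℚ

noncomputable def aP : R0 := MvPolynomial.X 0
noncomputable def hP : R0 := MvPolynomial.X 1

noncomputable def quadPoly : Polynomial R0 :=
  Polynomial.X ^ 2 - Polynomial.C hP * Polynomial.X - Polynomial.C aP

/-- `𝒜 = R₀[X]/(X² − h·X − a)`. -/
abbrev Afr : Type := AdjoinRoot quadPoly

noncomputable def Xa : Afr := AdjoinRoot.root quadPoly

/-- `ℚ[a,h,x₁,x₂]`, realized as the polynomial ring in `x₁ = X 0`, `x₂ = X 1` over `R₀`. -/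
abbrev S : Type := MvPolynomial (Fin 2) R0

noncomputable def y1 : S := MvPolynomial.X 0
noncomputable def y2 : S := MvPolynomial.X 1

/-- The ideal `(x₁ + x₂ − h, x₁x₂ + a)`. -/
noncomputable def I1 : Ideal S :=
  Ideal.span ({y1 + y2 - MvPolynomial.C hP, y1 * y2 + MvPolynomial.C aP} : Set S)

/-- The ideal `(x₁² − hx₁ − a, x₂² − hx₂ − a)`. -/
noncomputable def I2 : Ideal S :=
  Ideal.span ({y1 ^ 2 - MvPolynomial.C hP * y1 - MvPolynomial.C aP,
    y2 ^ 2 - MvPolynomial.C hP * y2 - MvPolynomial.C aP} : Set S)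

/-- `B₁ = ℚ[a,h,x₁,x₂]/(x₁ + x₂ − h, x₁x₂ + a)`. -/
abbrev B1 : Type := S ⧸ I1

/-- `B₂ = ℚ[a,h,x₁,x₂]/(x₁² − hx₁ − a, x₂² − hx₂ − a)`. -/
abbrev B2 : Type := S ⧸ I2


lemma quad_monic : quadPoly.Monic := by
  unfold quadPoly
  monicity!

lemma quad_natDegree : quadPoly.natDegree = 2 := by
  unfold quadPoly
  compute_degree!

lemma Xa_sq : Xa * Xa = algebraMap R0 Afr hP * Xa + algebraMap R0 Afr aP := by
  have h0 : AdjoinRoot.mk quadPoly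
      (Polynomial.X ^ 2 - Polynomial.C hP * Polynomial.X - Polynomial.C aP) = 0 :=
    AdjoinRoot.mk_self
  simp only [map_sub, map_pow, map_mul, AdjoinRoot.mk_X, AdjoinRoot.mk_C,
    ← AdjoinRoot.algebraMap_eq] at h0
  unfold Xa
  linear_combination h0

lemma Afr_repr (z : Afr) : ∃ c0 c1 : R0, z = algebraMap R0 Afr c0 + c1 • Xa := by
  obtain ⟨p, rfl⟩ := AdjoinRoot.mk_surjective z
  set r := p %ₘ quadPoly with hr
  have hmk : AdjoinRoot.mk quadPoly p = AdjoinRoot.mk quadPoly r := by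
    rw [hr, Polynomial.modByMonic_eq_sub_mul_div _ quadPoly]
    simp [map_sub, map_mul, AdjoinRoot.mk_self]
  have hdeg : r.natDegree ≤ 1 := by
    have h2 := Polynomial.natDegree_modByMonic_lt p quad_monic (by
      intro h1
      have h3 := quad_natDegree
      rw [h1] at h3
      simp at h3)
    rw [hr, quad_natDegree] at *
    omega
  refine ⟨r.coeff 0, r.coeff 1, ?_⟩
  rw [hmk]
  conv_lhs => rw [Polynomial.eq_X_add_C_of_natDegree_le_one hdeg]
  rw [map_add, map_mul, AdjoinRoot.mk_X, AdjoinRoot.mk_C, AdjoinRoot.mk_C]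
  rw [show (AdjoinRoot.of quadPoly : R0 →+* Afr) = algebraMap R0 Afr from rfl]
  rw [Algebra.smul_def]
  unfold Xa
  ring

set_option maxHeartbeats 1000000 in
set_option synthInstance.maxHeartbeats 400000 in

/-- multiplication by `x₁ − x₂` maps `I₁` into `I₂`, hence induces a
well-defined `R₀`-linear map `λ : B₁ → B₂`, `mk_{I₁} s ↦ mk_{I₂} ((x₁ − x₂)·s)`; under the
isomorphisms `f : B₁ ≅ 𝒜` and `g : B₂ ≅ 𝒜 ⊗ 𝒜`, the map `λ` corresponds to the
comultiplication `Δ`, i.e. `g ∘ λ = Δ ∘ f`.  (This is `Λ₁* = Δ`.) -/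
theorem stmt_17 (f : B1 ≃ₐ[R0] Afr) (hf : f (Ideal.Quotient.mk I1 y1) = Xa)
    (g : B2 ≃ₐ[R0] Afr ⊗[R0] Afr)
    (hg1 : g (Ideal.Quotient.mk I2 y1) = Xa ⊗ₜ[R0] (1 : Afr))
    (hg2 : g (Ideal.Quotient.mk I2 (MvPolynomial.C hP - y2)) = (1 : Afr) ⊗ₜ[R0] Xa)
    (Δ : Afr →ₗ[R0] Afr ⊗[R0] Afr)
    (hΔ1 : Δ 1 = (1 : Afr) ⊗ₜ[R0] Xa + Xa ⊗ₜ[R0] (1 : Afr) - hP • ((1 : Afr) ⊗ₜ[R0] (1 : Afr)))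
    (hΔX : Δ Xa = Xa ⊗ₜ[R0] Xa + aP • ((1 : Afr) ⊗ₜ[R0] (1 : Afr))) :
    (∀ u ∈ I1, (y1 - y2) * u ∈ I2) ∧
      ∀ s : S, g (Ideal.Quotient.mk I2 ((y1 - y2) * s)) = Δ (f (Ideal.Quotient.mk I1 s)) := by
  have hmem : ∀ u ∈ I1, (y1 - y2) * u ∈ I2 := by
    intro u hu
    rw [I1, Ideal.mem_span_pair] at hu
    obtain ⟨p, q, rfl⟩ := hu
    rw [I2, Ideal.mem_span_pair]
    exact ⟨p + q * y2, -(p + q * y1), by ring⟩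
  refine ⟨hmem, ?_⟩
  -- basic algebra-map facts
  have hgC : ∀ c : R0, g (Ideal.Quotient.mk I2 (MvPolynomial.C c))
      = algebraMap R0 (Afr ⊗[R0] Afr) c := fun c => g.commutes c
  have hfC : ∀ c : R0, f (Ideal.Quotient.mk I1 (MvPolynomial.C c))
      = algebraMap R0 Afr c := fun c => f.commutes c
  have hgy2 : g (Ideal.Quotient.mk I2 y2)
      = algebraMap R0 (Afr ⊗[R0] Afr) hP - (1 : Afr) ⊗ₜ[R0] Xa := by
    have h := hg2
    rw [map_sub, map_sub, hgC] at h
    linear_combination -h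
  have hsm : ∀ c : R0, algebraMap R0 (Afr ⊗[R0] Afr) c = c • ((1:Afr) ⊗ₜ[R0] (1:Afr)) := by
    intro c
    rw [Algebra.algebraMap_eq_smul_one, Algebra.TensorProduct.one_def]
  have e1 : g (Ideal.Quotient.mk I2 (y1 - y2))
      = (1 : Afr) ⊗ₜ[R0] Xa + Xa ⊗ₜ[R0] (1 : Afr) - hP • ((1 : Afr) ⊗ₜ[R0] (1 : Afr)) := by
    rw [map_sub, map_sub, hg1, hgy2, hsm]
    abel
  have e2 : g (Ideal.Quotient.mk I2 ((y1 - y2) * y1))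
      = Xa ⊗ₜ[R0] Xa + aP • ((1 : Afr) ⊗ₜ[R0] (1 : Afr)) := by
    have h : (y1 - y2) * y1 = y1 * y1 - y2 * y1 := by ring
    rw [h, map_sub, map_sub, map_mul, map_mul, map_mul, map_mul, hg1, hgy2]
    rw [Algebra.TensorProduct.tmul_mul_tmul, mul_one, Xa_sq, sub_mul,
      Algebra.TensorProduct.tmul_mul_tmul, one_mul, mul_one]
    simp only [← Algebra.smul_def, Algebra.algebraMap_eq_smul_one,
      TensorProduct.add_tmul, TensorProduct.smul_tmul', Algebra.TensorProduct.one_def,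
      smul_mul_assoc, one_mul, Algebra.TensorProduct.tmul_mul_tmul, mul_one]
    abel
  intro s
  obtain ⟨c0, c1, hc⟩ := Afr_repr (f (Ideal.Quotient.mk I1 s))
  have hs : Ideal.Quotient.mk I1 s
      = Ideal.Quotient.mk I1 (MvPolynomial.C c0 + MvPolynomial.C c1 * y1) := by
    apply f.injective
    rw [hc]
    simp only [map_add, map_mul, hfC, hf, Algebra.smul_def]
  have hdiff : s - (MvPolynomial.C c0 + MvPolynomial.C c1 * y1) ∈ I1 := by
    rwa [Ideal.Quotient.eq] at hs
  have hq : Ideal.Quotient.mk I2 ((y1 - y2) * s)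
      = Ideal.Quotient.mk I2 ((y1 - y2) * (MvPolynomial.C c0 + MvPolynomial.C c1 * y1)) := by
    rw [Ideal.Quotient.eq, ← mul_sub]
    exact hmem _ hdiff
  rw [hq]
  have hexp : (y1 - y2) * (MvPolynomial.C c0 + MvPolynomial.C c1 * y1)
      = MvPolynomial.C c0 * (y1 - y2) + MvPolynomial.C c1 * ((y1 - y2) * y1) := by ring
  have hmulC : ∀ (c : R0) (u : S), g (Ideal.Quotient.mk I2 (MvPolynomial.C c * u))
      = c • g (Ideal.Quotient.mk I2 u) := fun c u => by
    rw [map_mul, map_mul, hgC, ← Algebra.smul_def]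
  rw [hexp, hc]
  rw [map_add, map_add, hmulC, hmulC, e1, e2]
  rw [map_add, Algebra.algebraMap_eq_smul_one, map_smul, map_smul, hΔ1, hΔX]

end
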